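/- For a ∈ (-1/2, 1/2), the function z(s) = √(1/2 + a·cos 2s) satisfies the ODE z'' + (z'² - 1)/z + 2z = 0 on ℝ. -/

import Mathlib

open Real MeasureTheory intervalIntegral

noncomputable def psi (a t : ℝ) : ℝ :=
  Real.sqrt (1/4 - a^2) /
    (Real.sqrt (1/2 + a * Real.cos (2*t)) * (1/2 - a * Real.cos (2*t)))

noncomputable def phi (a phi0 s : ℝ) : ℝ := phi0 + ∫ t in (0:ℝ)..s, psi a t

noncomputable def Ca (a : ℝ) : ℝ := ∫ t in (0:ℝ)..Real.pi, psi a t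

noncomputable def xa (a phi0 s : ℝ) : ℝ :=
  Real.sqrt (1/2 - a * Real.cos (2*s)) * Real.cos (phi a phi0 s)

noncomputable def ya (a phi0 s : ℝ) : ℝ :=
  Real.sqrt (1/2 - a * Real.cos (2*s)) * Real.sin (phi a phi0 s)

noncomputable def za (a s : ℝ) : ℝ := Real.sqrt (1/2 + a * Real.cos (2*s))

noncomputable def fa (a phi0 s : ℝ) : ℝ :=
  a * Real.sin (2*s) * Real.sin (phi a phi0 s) +
    Real.sqrt (1/4 - a^2) * Real.sqrt (1/2 + a * Real.cos (2*s)) * Real.cos (phi a phi0 s)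

theorem stmt13 (a : ℝ) (ha : a ∈ Set.Ioo (-(1/2) : ℝ) (1/2)) (s : ℝ) :
    deriv (deriv (za a)) s + ((deriv (za a) s)^2 - 1) / za a s + 2 * za a s = 0 := by
  obtain ⟨ha1, ha2⟩ := ha
  have hus : ∀ t : ℝ, 0 < 1/2 + a * Real.cos (2*t) := by
    intro t
    have h1 : |a * Real.cos (2*t)| < 1/2 := by
      rw [abs_mul]
      calc |a| * |Real.cos (2*t)| ≤ |a| * 1 :=
            mul_le_mul_of_nonneg_left (Real.abs_cos_le_one _) (abs_nonneg a)
        _ = |a| := mul_one _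
        _ < 1/2 := abs_lt.mpr ⟨ha1, ha2⟩
    have h2 := abs_lt.mp h1
    linarith [h2.1]
  have hsq : ∀ t : ℝ, 0 < Real.sqrt (1/2 + a * Real.cos (2*t)) :=
    fun t => Real.sqrt_pos.mpr (hus t)
  have hderivu : ∀ t : ℝ, HasDerivAt (fun t : ℝ => 1/2 + a * Real.cos (2*t))
      (-(2*a*Real.sin (2*t))) t := by
    intro t
    have h1 : HasDerivAt (fun t : ℝ => 2*t) 2 t := by
      simpa using (hasDerivAt_id t).const_mul 2
    have h2 : HasDerivAt (fun t : ℝ => Real.cos (2*t)) (-Real.sin (2*t) * 2) t :=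
      (Real.hasDerivAt_cos (2*t)).comp t h1
    have h3 := (h2.const_mul a).const_add (1/2 : ℝ)
    refine h3.congr_deriv ?_
    ring
  have hz1 : ∀ t : ℝ, HasDerivAt (za a)
      (-(a*Real.sin (2*t)) / Real.sqrt (1/2 + a * Real.cos (2*t))) t := by
    intro t
    have h := (Real.hasDerivAt_sqrt (ne_of_gt (hus t))).comp t (hderivu t)
    have h' : HasDerivAt (za a)
        (1 / (2 * Real.sqrt (1/2 + a * Real.cos (2*t))) * (-(2*a*Real.sin (2*t)))) t := h
    convert h' using 1
    set r := Real.sqrt (1/2 + a * Real.cos (2*t)) with hrdef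
    have hrne : r ≠ 0 := ne_of_gt (hsq t)
    field_simp
  have hderiv_za : deriv (za a) = fun t =>
      -(a*Real.sin (2*t)) / Real.sqrt (1/2 + a * Real.cos (2*t)) := by
    funext t; exact (hz1 t).deriv
  -- numerator derivative
  have hnum : HasDerivAt (fun t : ℝ => -(a*Real.sin (2*t))) (-(2*a*Real.cos (2*s))) s := by
    have h1 : HasDerivAt (fun t : ℝ => 2*t) 2 s := by
      simpa using (hasDerivAt_id s).const_mul 2
    have h2 : HasDerivAt (fun t : ℝ => Real.sin (2*t)) (Real.cos (2*s) * 2) s :=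
      (Real.hasDerivAt_sin (2*s)).comp s h1
    have h3 := (h2.const_mul a).neg
    refine h3.congr_deriv ?_
    ring
  have hden : HasDerivAt (fun t : ℝ => Real.sqrt (1/2 + a * Real.cos (2*t)))
      (-(a*Real.sin (2*s)) / Real.sqrt (1/2 + a * Real.cos (2*s))) s := hz1 s
  have hg := hnum.div hden (ne_of_gt (hsq s))
  have hderiv2 : deriv (deriv (za a)) s =
      ((-(2*a*Real.cos (2*s))) * Real.sqrt (1/2 + a * Real.cos (2*s)) -
        (-(a*Real.sin (2*s))) * (-(a*Real.sin (2*s)) / Real.sqrt (1/2 + a * Real.cos (2*s)))) /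
        (Real.sqrt (1/2 + a * Real.cos (2*s)))^2 := by
    rw [hderiv_za]
    exact hg.deriv
  rw [hderiv2, hderiv_za]
  simp only [za]
  set r := Real.sqrt (1/2 + a * Real.cos (2*s)) with hr
  have hrpos : 0 < r := hsq s
  have hr2 : r^2 = 1/2 + a * Real.cos (2*s) := Real.sq_sqrt (le_of_lt (hus s))
  have hrne : r ≠ 0 := ne_of_gt hrpos
  field_simp
  linear_combination (2*r^2) * hr2
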